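/- For every formal power series f over a commutative ring and every natural number k, Φ(x^k · f(x)^{k+1}) = x^k · Φ(f)^{k+1}, where Φ is the run transform. -/

import Mathlib

open PowerSeries MvPowerSeries Finset

/-- Substitution of a bivariate power series with zero constant term (and positive
order in every monomial) into a univariate formal power series, defined
coefficient-wise. -/
noncomputable def substPS {R : Type*} [CommRing R]
    (a : MvPowerSeries (Fin 2) R) (f : PowerSeries R) : MvPowerSeries (Fin 2) R :=
  fun d => ∑ n ∈ Finset.range (d 0 + d 1 + 1),
    (PowerSeries.coeff n f) * MvPowerSeries.coeff d (a ^ n)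

/-- The run transform `Φ(f)(x,y) = ((1-x)/(1-xy)) · f(x(1-x)/(1-xy))`. -/
noncomputable def runTransform {R : Type*} [CommRing R] (f : PowerSeries R) :
    MvPowerSeries (Fin 2) R :=
  (1 - MvPowerSeries.X 0) * MvPowerSeries.invOfUnit (1 - MvPowerSeries.X 0 * MvPowerSeries.X 1) 1 *
    substPS ((MvPowerSeries.X 0 * (1 - MvPowerSeries.X 0)) *
      MvPowerSeries.invOfUnit (1 - MvPowerSeries.X 0 * MvPowerSeries.X 1) 1) f

section Aux

variable {R : Type*} [CommRing R] {a : MvPowerSeries (Fin 2) R}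

lemma aux_eq_zero_of_apply {d : Fin 2 →₀ ℕ} (h0 : d 0 = 0) (h1 : d 1 = 0) : d = 0 := by
  ext i
  fin_cases i <;> simpa

lemma aux_coeff_pow_eq_zero (ha : MvPowerSeries.constantCoeff a = 0) :
    ∀ (n : ℕ) (d : Fin 2 →₀ ℕ), d 0 + d 1 < n → MvPowerSeries.coeff d (a ^ n) = 0 := by
  intro n
  induction n with
  | zero => intro d hd; omega
  | succ n ih =>
    intro d hd
    rw [pow_succ', MvPowerSeries.coeff_mul]
    apply Finset.sum_eq_zero
    intro p hp
    rw [Finset.HasAntidiagonal.mem_antidiagonal] at hp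
    have h0 : d 0 = p.1 0 + p.2 0 := by rw [← hp, Finsupp.add_apply]
    have h1 : d 1 = p.1 1 + p.2 1 := by rw [← hp, Finsupp.add_apply]
    by_cases hz : p.1 0 = 0 ∧ p.1 1 = 0
    · have : p.1 = 0 := aux_eq_zero_of_apply hz.1 hz.2
      rw [this]
      have : MvPowerSeries.coeff (0 : Fin 2 →₀ ℕ) a = 0 := by
        rwa [MvPowerSeries.coeff_zero_eq_constantCoeff]
      rw [this, zero_mul]
    · have : p.2 0 + p.2 1 < n := by omega
      rw [ih p.2 this, mul_zero]

lemma aux_coeff_substPS (ha : MvPowerSeries.constantCoeff a = 0)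
    (f : PowerSeries R) {N : ℕ} (d : Fin 2 →₀ ℕ) (hd : d 0 + d 1 < N) :
    MvPowerSeries.coeff d (substPS a f) =
      ∑ n ∈ Finset.range N, (PowerSeries.coeff n f) * MvPowerSeries.coeff d (a ^ n) := by
  have : MvPowerSeries.coeff d (substPS a f) =
      ∑ n ∈ Finset.range (d 0 + d 1 + 1),
        (PowerSeries.coeff n f) * MvPowerSeries.coeff d (a ^ n) := rfl
  rw [this]
  apply Finset.sum_subset
  · intro n hn
    rw [Finset.mem_range] at hn ⊢
    omega
  · intro n _ hn
    rw [Finset.mem_range] at hn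
    rw [aux_coeff_pow_eq_zero ha n d (by omega), mul_zero]

lemma aux_coeff_substPS_aeval (ha : MvPowerSeries.constantCoeff a = 0)
    (f : PowerSeries R) {N : ℕ} (d : Fin 2 →₀ ℕ) (hd : d 0 + d 1 < N) :
    MvPowerSeries.coeff d (substPS a f) =
      MvPowerSeries.coeff d (Polynomial.aeval a (PowerSeries.trunc N f)) := by
  obtain ⟨N', rfl⟩ : ∃ N', N = N' + 1 := ⟨N - 1, by omega⟩
  rw [aux_coeff_substPS ha f d hd,
    Polynomial.aeval_eq_sum_range' (PowerSeries.natDegree_trunc_lt f N') a, map_sum]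
  apply Finset.sum_congr rfl
  intro n hn
  rw [Finset.mem_range] at hn
  rw [LinearMap.map_smul, smul_eq_mul, PowerSeries.coeff_trunc, if_pos hn]

lemma aux_coeff_aeval_trunc (ha : MvPowerSeries.constantCoeff a = 0)
    {N : ℕ} (d : Fin 2 →₀ ℕ) (hd : d 0 + d 1 < N) (Q : Polynomial R) :
    MvPowerSeries.coeff d (Polynomial.aeval a (PowerSeries.trunc N (Q : PowerSeries R))) =
      MvPowerSeries.coeff d (Polynomial.aeval a Q) := by
  set M := max N (Q.natDegree + 1) with hM
  have h1 : (PowerSeries.trunc N (Q : PowerSeries R)).natDegree < M := by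
    obtain ⟨N', rfl⟩ : ∃ N', N = N' + 1 := ⟨N - 1, by omega⟩
    exact lt_of_lt_of_le (PowerSeries.natDegree_trunc_lt _ _) (le_max_left _ _)
  have h2 : Q.natDegree < M := lt_of_lt_of_le (Nat.lt_succ_self _) (le_max_right _ _)
  rw [Polynomial.aeval_eq_sum_range' h1 a, Polynomial.aeval_eq_sum_range' h2 a,
    map_sum, map_sum]
  apply Finset.sum_congr rfl
  intro n _
  rw [LinearMap.map_smul, LinearMap.map_smul, smul_eq_mul, smul_eq_mul,
    PowerSeries.coeff_trunc]
  by_cases hn : n < N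
  · rw [if_pos hn, Polynomial.coeff_coe]
  · rw [if_neg hn, aux_coeff_pow_eq_zero ha n d (by omega), mul_zero, mul_zero]

lemma substPS_mul (ha : MvPowerSeries.constantCoeff a = 0)
    (f g : PowerSeries R) : substPS a (f * g) = substPS a f * substPS a g := by
  ext d
  set N := d 0 + d 1 + 1 with hN
  rw [aux_coeff_substPS_aeval (N := N) ha (f * g) d (by omega)]
  have key : PowerSeries.trunc N (f * g) =
      PowerSeries.trunc N ((PowerSeries.trunc N f : PowerSeries R) *
        (PowerSeries.trunc N g : PowerSeries R)) :=
    (PowerSeries.trunc_trunc_mul_trunc f g).symm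
  rw [key]
  have hcast : ((PowerSeries.trunc N f : PowerSeries R) * (PowerSeries.trunc N g : PowerSeries R)) =
      ((PowerSeries.trunc N f * PowerSeries.trunc N g : Polynomial R) : PowerSeries R) := by
    push_cast; ring
  rw [hcast, aux_coeff_aeval_trunc (N := N) ha d (by omega), map_mul,
    MvPowerSeries.coeff_mul, MvPowerSeries.coeff_mul]
  apply Finset.sum_congr rfl
  intro p hp
  rw [Finset.HasAntidiagonal.mem_antidiagonal] at hp
  have h0 : d 0 = p.1 0 + p.2 0 := by rw [← hp, Finsupp.add_apply]
  have h1 : d 1 = p.1 1 + p.2 1 := by rw [← hp, Finsupp.add_apply]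
  rw [aux_coeff_substPS_aeval (N := N) ha f p.1 (by omega),
    aux_coeff_substPS_aeval (N := N) ha g p.2 (by omega)]

lemma substPS_one : substPS a (1 : PowerSeries R) = 1 := by
  ext d
  have : MvPowerSeries.coeff d (substPS a 1) =
      ∑ n ∈ Finset.range (d 0 + d 1 + 1),
        (PowerSeries.coeff n 1) * MvPowerSeries.coeff d (a ^ n) := rfl
  rw [this, Finset.sum_eq_single 0]
  · simp
  · intro n _ hn
    rw [PowerSeries.coeff_one, if_neg hn, zero_mul]
  · intro h
    simp at h

lemma substPS_X (ha : MvPowerSeries.constantCoeff a = 0) :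
    substPS a (PowerSeries.X : PowerSeries R) = a := by
  ext d
  have : MvPowerSeries.coeff d (substPS a PowerSeries.X) =
      ∑ n ∈ Finset.range (d 0 + d 1 + 1),
        (PowerSeries.coeff n PowerSeries.X) * MvPowerSeries.coeff d (a ^ n) := rfl
  rw [this, Finset.sum_eq_single 1]
  · simp
  · intro n _ hn
    rw [PowerSeries.coeff_X, if_neg hn, zero_mul]
  · intro h
    rw [Finset.mem_range] at h
    have hd0 : d 0 = 0 := by omega
    have hd1 : d 1 = 0 := by omega
    rw [aux_eq_zero_of_apply hd0 hd1]
    simp [MvPowerSeries.coeff_zero_eq_constantCoeff, ha]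

lemma substPS_pow (ha : MvPowerSeries.constantCoeff a = 0)
    (f : PowerSeries R) (n : ℕ) : substPS a (f ^ n) = (substPS a f) ^ n := by
  induction n with
  | zero => simpa using substPS_one
  | succ n ih => rw [pow_succ, pow_succ, substPS_mul ha, ih]

end Aux

/-- `Φ(x^k · f^(k+1)) = x^k · Φ(f)^(k+1)`. -/
theorem runTransform_pow {R : Type*} [CommRing R] (f : PowerSeries R) (k : ℕ) :
    runTransform (PowerSeries.X ^ k * f ^ (k + 1)) =
      MvPowerSeries.X 0 ^ k * runTransform f ^ (k + 1) := by
  have ha : MvPowerSeries.constantCoeff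
      ((MvPowerSeries.X 0 * (1 - MvPowerSeries.X 0)) *
        MvPowerSeries.invOfUnit (1 - MvPowerSeries.X 0 * MvPowerSeries.X 1) 1 : MvPowerSeries (Fin 2) R) = 0 := by
    rw [map_mul, map_mul, MvPowerSeries.constantCoeff_X, zero_mul, zero_mul]
  rw [runTransform, runTransform, substPS_mul ha, substPS_pow ha, substPS_pow ha, substPS_X ha]
  generalize substPS ((MvPowerSeries.X 0 * (1 - MvPowerSeries.X 0)) *
      MvPowerSeries.invOfUnit (1 - MvPowerSeries.X 0 * MvPowerSeries.X 1) 1) f = s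
  generalize (MvPowerSeries.invOfUnit (1 - MvPowerSeries.X 0 * MvPowerSeries.X 1) 1 :
      MvPowerSeries (Fin 2) R) = v
  generalize (1 - MvPowerSeries.X 0 : MvPowerSeries (Fin 2) R) = w
  generalize (MvPowerSeries.X 0 : MvPowerSeries (Fin 2) R) = x
  ring
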